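/- An n×n copositive matrix A is irreducible with respect to the cone S₊(n) of positive semi-definite n×n matrices if and only if the linear span of the set of minimal zeros of A equals ℝ^n. -/

import Mathlib

open Matrix

/-- A symmetric matrix `A` is copositive if `xᵀ A x ≥ 0` for all entrywise nonnegative `x`. -/
def Copositive {n : ℕ} (A : Matrix (Fin n) (Fin n) ℝ) : Prop :=
  A.IsSymm ∧ ∀ x : Fin n → ℝ, (∀ i, 0 ≤ x i) → 0 ≤ x ⬝ᵥ A.mulVec x

/-- The support of a vector. -/
def Supp {ι : Type*} (u : ι → ℝ) : Set ι := {i | u i ≠ 0}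

/-- A zero of a copositive matrix: a nonzero nonnegative vector `u` with `uᵀ A u = 0`. -/
def IsZeroOf {n : ℕ} (A : Matrix (Fin n) (Fin n) ℝ) (u : Fin n → ℝ) : Prop :=
  u ≠ 0 ∧ (∀ i, 0 ≤ u i) ∧ u ⬝ᵥ A.mulVec u = 0

/-- A minimal zero: a zero such that no zero has support strictly contained in its support. -/
def IsMinimalZeroOf {n : ℕ} (A : Matrix (Fin n) (Fin n) ℝ) (u : Fin n → ℝ) : Prop :=
  IsZeroOf A u ∧ ¬ ∃ v, IsZeroOf A v ∧ Supp v ⊂ Supp u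

/-- The principal submatrix of `A` with rows and columns in `I`. -/
def subMat {n : ℕ} (A : Matrix (Fin n) (Fin n) ℝ) (I : Finset (Fin n)) :
    Matrix {i // i ∈ I} {i // i ∈ I} ℝ :=
  A.submatrix Subtype.val Subtype.val

/-- The subvector of `u` with indices in `I`. -/
def subVec {n : ℕ} (u : Fin n → ℝ) (I : Finset (Fin n)) : {i // i ∈ I} → ℝ :=
  fun i => u i.val

/-- Irreducibility of a copositive matrix `A` with respect to a set `M` of matrices. -/
def IrreducibleWrtSet {n : ℕ} (A : Matrix (Fin n) (Fin n) ℝ)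
    (M : Set (Matrix (Fin n) (Fin n) ℝ)) : Prop :=
  ¬ ∃ γ : ℝ, 0 < γ ∧ ∃ B ∈ M, B ≠ 0 ∧ Copositive (A - γ • B)

/-- Irreducibility of a copositive matrix `A` with respect to a single matrix `M`. -/
def IrreducibleWrtMat {n : ℕ} (A M : Matrix (Fin n) (Fin n) ℝ) : Prop :=
  ¬ ∃ γ : ℝ, 0 < γ ∧ Copositive (A - γ • M)

/-- An extremal element of a cone `K` of vectors. -/
def IsExtremalIn {ι : Type*} (K : Set (ι → ℝ)) (u : ι → ℝ) : Prop :=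
  u ∈ K ∧ u ≠ 0 ∧ ∀ v w, v ∈ K → w ∈ K → u = v + w →
    (∃ a : ℝ, 0 ≤ a ∧ v = a • u) ∧ (∃ b : ℝ, 0 ≤ b ∧ w = b • u)

/-- The matrix with entries 1 at positions `(i,j)` and `(j,i)` and 0 elsewhere. -/
def Eij {n : ℕ} (i j : Fin n) : Matrix (Fin n) (Fin n) ℝ :=
  fun a b => if (a = i ∧ b = j) ∨ (a = j ∧ b = i) then 1 else 0

namespace Stmt17Aux

variable {n : ℕ}

lemma quad_swap (A : Matrix (Fin n) (Fin n) ℝ) (hA : A.IsSymm) (x y : Fin n → ℝ) :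
    x ⬝ᵥ A *ᵥ y = y ⬝ᵥ A *ᵥ x := by
  rw [Matrix.dotProduct_mulVec, ← Matrix.mulVec_transpose, hA.eq, dotProduct_comm]

lemma quad_add (A : Matrix (Fin n) (Fin n) ℝ) (hA : A.IsSymm) (x y : Fin n → ℝ) :
    (x + y) ⬝ᵥ A *ᵥ (x + y) =
      x ⬝ᵥ A *ᵥ x + 2 * (y ⬝ᵥ A *ᵥ x) + y ⬝ᵥ A *ᵥ y := by
  rw [Matrix.mulVec_add, dotProduct_add, add_dotProduct,
    add_dotProduct, quad_swap A hA x y]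
  ring

lemma quad_smul (A : Matrix (Fin n) (Fin n) ℝ) (c : ℝ) (x : Fin n → ℝ) :
    (c • x) ⬝ᵥ A *ᵥ (c • x) = c ^ 2 * (x ⬝ᵥ A *ᵥ x) := by
  rw [smul_dotProduct, Matrix.mulVec_smul, dotProduct_smul]
  simp [smul_eq_mul]; ring

/-- First-order optimality: `(A u) i ≥ 0` at a zero `u`. -/
lemma mulVec_nonneg_at_zero {A : Matrix (Fin n) (Fin n) ℝ} (hA : Copositive A)
    {u : Fin n → ℝ} (hu : IsZeroOf A u) (i : Fin n) : 0 ≤ (A *ᵥ u) i := by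
  by_contra hneg
  push_neg at hneg
  set c := (A *ᵥ u) i with hc
  set t : ℝ := -c / (|A i i| + 1) with ht
  have ht0 : 0 < t := by
    apply div_pos (by linarith) (by positivity)
  set s : Fin n → ℝ := t • (Pi.single i 1 : Fin n → ℝ) with hs
  have hx : ∀ j, 0 ≤ (u + s) j := by
    intro j
    have hj := hu.2.1 j
    by_cases hji : j = i
    · subst hji; simp [hs, Pi.single_apply]; positivity
    · simp [hs, Pi.single_apply, hji, hj]
  have h0 := hA.2 _ hx
  rw [quad_add A hA.1 u s] at h0
  have h1 : s ⬝ᵥ A *ᵥ u = t * c := by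
    rw [hs, smul_dotProduct]
    simp [dotProduct, Pi.single_apply, hc]
  have h2 : s ⬝ᵥ A *ᵥ s = t ^ 2 * A i i := by
    rw [hs, quad_smul]
    congr 1
    simp [dotProduct, Matrix.mulVec_single, Pi.single_apply]
  rw [hu.2.2, h1, h2] at h0
  have hAbs : A i i ≤ |A i i| := le_abs_self _
  have htle : t * (|A i i| + 1) = -c := by
    rw [ht]; field_simp
  nlinarith [ht0, hneg, mul_pos ht0 ht0]

/-- Complementarity: `(A u) i = 0` on the support of a zero `u`. -/
lemma mulVec_eq_zero_on_supp {A : Matrix (Fin n) (Fin n) ℝ} (hA : Copositive A)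
    {u : Fin n → ℝ} (hu : IsZeroOf A u) {i : Fin n} (hi : u i ≠ 0) : (A *ᵥ u) i = 0 := by
  have hsum : ∑ j, u j * (A *ᵥ u) j = 0 := hu.2.2
  have hterm : ∀ j ∈ Finset.univ, 0 ≤ u j * (A *ᵥ u) j := fun j _ =>
    mul_nonneg (hu.2.1 j) (mulVec_nonneg_at_zero hA hu j)
  have := (Finset.sum_eq_zero_iff_of_nonneg hterm).mp hsum i (Finset.mem_univ i)
  have hui : 0 < u i := lt_of_le_of_ne (hu.2.1 i) (Ne.symm hi)
  rcases mul_eq_zero.mp this with h | h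
  · exact absurd h hi
  · exact h

lemma dot_mulVec_zero {A : Matrix (Fin n) (Fin n) ℝ} (hA : Copositive A)
    {u : Fin n → ℝ} (hu : IsZeroOf A u) {y : Fin n → ℝ}
    (hy : ∀ i, y i ≠ 0 → u i ≠ 0) : y ⬝ᵥ A *ᵥ u = 0 := by
  apply Finset.sum_eq_zero
  intro j _
  by_cases hj : y j = 0
  · simp [hj]
  · rw [mulVec_eq_zero_on_supp hA hu (hy j hj), mul_zero]

lemma dot_mulVec_nonneg {A : Matrix (Fin n) (Fin n) ℝ} (hA : Copositive A)
    {u : Fin n → ℝ} (hu : IsZeroOf A u) {y : Fin n → ℝ} (hy : ∀ i, 0 ≤ y i) :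
    0 ≤ y ⬝ᵥ A *ᵥ u :=
  Finset.sum_nonneg fun j _ => mul_nonneg (hy j) (mulVec_nonneg_at_zero hA hu j)

/-- Every zero lies in the span of the minimal zeros. -/
lemma zero_mem_span {A : Matrix (Fin n) (Fin n) ℝ} (hA : Copositive A) :
    ∀ (N : ℕ) (u : Fin n → ℝ), IsZeroOf A u →
      (Finset.univ.filter fun i => u i ≠ 0).card ≤ N →
      u ∈ Submodule.span ℝ {w : Fin n → ℝ | IsMinimalZeroOf A w} := by
  intro N
  induction N with
  | zero =>
    intro u hu hcard
    exfalso
    apply hu.1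
    ext i
    by_contra hi
    have : i ∈ Finset.univ.filter fun i => u i ≠ 0 := by simpa using hi
    simp [Finset.card_eq_zero.mp (Nat.le_zero.mp hcard)] at this
  | succ N ih =>
    intro u hu hcard
    by_cases hmin : IsMinimalZeroOf A u
    · exact Submodule.subset_span hmin
    · have hE : ∃ w, IsZeroOf A w ∧ Supp w ⊂ Supp u := by
        by_contra hE
        exact hmin ⟨hu, hE⟩
      obtain ⟨w, hw, hsub⟩ := hE
      -- subtract a multiple of w from u
      have hSw : (Finset.univ.filter fun i => w i ≠ 0).Nonempty := by
        rcases Function.ne_iff.mp hw.1 with ⟨i, hi⟩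
        exact ⟨i, by simpa using hi⟩
      set S := Finset.univ.filter fun i => w i ≠ 0 with hS
      set α := S.inf' hSw (fun i => u i / w i) with hα
      obtain ⟨i₀, hi₀S, hi₀⟩ := S.exists_mem_eq_inf' hSw (fun i => u i / w i)
      have hwpos : ∀ i ∈ S, 0 < w i := by
        intro i hi
        have : w i ≠ 0 := by simpa [hS] using hi
        exact lt_of_le_of_ne (hw.2.1 i) (Ne.symm this)
      have hsupp : ∀ i, w i ≠ 0 → u i ≠ 0 := fun i hi => hsub.1 hi
      have hupos : ∀ i ∈ S, 0 < u i := by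
        intro i hi
        have : w i ≠ 0 := by simpa [hS] using hi
        exact lt_of_le_of_ne (hu.2.1 i) (Ne.symm (hsupp i this))
      have hαpos : 0 < α := by
        rw [hα, Finset.lt_inf'_iff]
        exact fun i hi => div_pos (hupos i hi) (hwpos i hi)
      set y := u - α • w with hy
      have hy_nonneg : ∀ i, 0 ≤ y i := by
        intro i
        by_cases hi : i ∈ S
        · have hle : α ≤ u i / w i := Finset.inf'_le _ hi
          have := (le_div_iff₀ (hwpos i hi)).mp hle
          simp [hy, smul_eq_mul]
          linarith
        · have : w i = 0 := by
            by_contra hne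
            exact hi (by simpa [hS] using hne)
          simp [hy, this, smul_eq_mul, hu.2.1 i]
      have hyi₀ : y i₀ = 0 := by
        have : α = u i₀ / w i₀ := hi₀
        have hwi₀ := hwpos i₀ hi₀S
        simp [hy, smul_eq_mul, this]
        field_simp
        ring
      have hyS : ∀ i, y i ≠ 0 → u i ≠ 0 := by
        intro i hi
        by_contra hui
        have hwI : w i = 0 := by
          by_contra hne
          exact hsupp i hne hui
        apply hi
        simp [hy, hwI, hui]
      have hui₀ : u i₀ ≠ 0 := hsupp i₀ (by simpa [hS] using hi₀S)
      have hwAu : w ⬝ᵥ A *ᵥ u = 0 := dot_mulVec_zero hA hu hsupp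
      have hqy : y ⬝ᵥ A *ᵥ y = 0 := by
        have hAy : A *ᵥ y = A *ᵥ u - α • (A *ᵥ w) := by
          rw [hy, Matrix.mulVec_sub, Matrix.mulVec_smul]
        have hwAy : w ⬝ᵥ A *ᵥ y = 0 := by
          rw [hAy, dotProduct_sub, hwAu, dotProduct_smul, smul_eq_mul, hw.2.2,
            mul_zero, sub_zero]
        have hdecomp : u = y + α • w := by rw [hy]; abel
        have hq := hu.2.2
        rw [hdecomp, quad_add A hA.1 y (α • w)] at hq
        have h1 : (α • w) ⬝ᵥ A *ᵥ y = α * (w ⬝ᵥ A *ᵥ y) := by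
          rw [smul_dotProduct]; simp
        have h2 : (α • w) ⬝ᵥ A *ᵥ (α • w) = α ^ 2 * (w ⬝ᵥ A *ᵥ w) := quad_smul A α w
        rw [h1, h2, hwAy, hw.2.2] at hq
        linarith
      -- the Finset supports
      have hFwu : (Finset.univ.filter fun i => w i ≠ 0) ⊂ Finset.univ.filter fun i => u i ≠ 0 := by
        constructor
        · intro i hi
          simp only [Finset.mem_filter, Finset.mem_univ, true_and] at hi ⊢
          exact hsupp i hi
        · intro hcon
          apply hsub.2
          intro i hi
          have : i ∈ Finset.univ.filter fun j => u j ≠ 0 := by simpa [Supp] using hi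
          simpa [Supp] using hcon this
      have hcardw : (Finset.univ.filter fun i => w i ≠ 0).card ≤ N := by
        have := Finset.card_lt_card hFwu
        omega
      have hwspan : w ∈ Submodule.span ℝ {v : Fin n → ℝ | IsMinimalZeroOf A v} :=
        ih w hw hcardw
      by_cases hy0 : y = 0
      · have : u = α • w := by
          rw [hy] at hy0
          have := sub_eq_zero.mp hy0
          exact this
        rw [this]
        exact Submodule.smul_mem _ α hwspan
      · have hyzero : IsZeroOf A y := ⟨hy0, hy_nonneg, hqy⟩
        have hFy : (Finset.univ.filter fun i => y i ≠ 0) ⊆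
            (Finset.univ.filter fun i => u i ≠ 0).erase i₀ := by
          intro i hi
          simp only [Finset.mem_filter, Finset.mem_univ, true_and] at hi
          refine Finset.mem_erase.mpr ⟨?_, by simpa using hyS i hi⟩
          rintro rfl
          exact hi hyi₀
        have hcardy : (Finset.univ.filter fun i => y i ≠ 0).card ≤ N := by
          have h1 := Finset.card_le_card hFy
          have h2 : i₀ ∈ Finset.univ.filter fun i => u i ≠ 0 := by simpa using hui₀
          have h3 := Finset.card_erase_of_mem h2
          omega
        have hyspan := ih y hyzero hcardy
        have : u = y + α • w := by rw [hy]; abel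
        rw [this]
        exact Submodule.add_mem _ hyspan (Submodule.smul_mem _ α hwspan)

lemma quad_continuous (A : Matrix (Fin n) (Fin n) ℝ) :
    Continuous fun x : Fin n → ℝ => x ⬝ᵥ A *ᵥ x := by
  show Continuous fun x : Fin n → ℝ => ∑ i, x i * ∑ j, A i j * x j
  fun_prop

lemma simplex_compact (J : Finset (Fin n)) :
    IsCompact {x : Fin n → ℝ | (∀ i, 0 ≤ x i) ∧ (∀ i ∉ J, x i = 0) ∧ ∑ i, x i = 1} := by
  rw [Metric.isCompact_iff_isClosed_bounded]
  constructor
  · have h1 : IsClosed {x : Fin n → ℝ | ∀ i, 0 ≤ x i} := by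
      have : {x : Fin n → ℝ | ∀ i, 0 ≤ x i} = ⋂ i, {x | 0 ≤ x i} := by ext x; simp
      rw [this]
      exact isClosed_iInter fun i => isClosed_le continuous_const (continuous_apply i)
    have h2 : IsClosed {x : Fin n → ℝ | ∀ i ∉ J, x i = 0} := by
      have : {x : Fin n → ℝ | ∀ i ∉ J, x i = 0} = ⋂ i ∈ Jᶜ, {x | x i = 0} := by
        ext x; simp
      rw [this]
      exact isClosed_biInter fun i _ => isClosed_eq (continuous_apply i) continuous_const
    have h3 : IsClosed {x : Fin n → ℝ | ∑ i, x i = 1} :=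
      isClosed_eq (by fun_prop) continuous_const
    exact (h1.inter (h2.inter h3) : _)
  · rw [isBounded_iff_forall_norm_le]
    refine ⟨1, fun x hx => ?_⟩
    rw [pi_norm_le_iff_of_nonneg zero_le_one]
    intro i
    rw [Real.norm_eq_abs, abs_le]
    constructor
    · linarith [hx.1 i]
    · calc x i ≤ ∑ j, x j := Finset.single_le_sum (fun j _ => hx.1 j) (Finset.mem_univ i)
        _ = 1 := hx.2.2

/-- The key uniform bound, by induction on the face `J` of the nonnegative orthant. -/
lemma main_claim {A : Matrix (Fin n) (Fin n) ℝ} (hA : Copositive A)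
    (v : Fin n → ℝ) (hv : ∀ u, IsZeroOf A u → v ⬝ᵥ u = 0) :
    ∀ (N : ℕ) (J : Finset (Fin n)), J.card ≤ N → ∃ γ : ℝ, 0 < γ ∧
      ∀ x : Fin n → ℝ, (∀ i, 0 ≤ x i) → (∀ i ∉ J, x i = 0) →
        γ * (v ⬝ᵥ x) ^ 2 ≤ x ⬝ᵥ A *ᵥ x := by
  intro N
  induction N with
  | zero =>
    intro J hJ
    refine ⟨1, one_pos, fun x hx hxJ => ?_⟩
    have hJ0 : J = ∅ := Finset.card_eq_zero.mp (Nat.le_zero.mp hJ)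
    have hx0 : x = 0 := by
      ext i
      exact hxJ i (by simp [hJ0])
    simp [hx0]
  | succ N ih =>
    intro J hJ
    by_cases hzero : ∃ u, IsZeroOf A u ∧ ∀ i, u i ≠ 0 → i ∈ J
    · -- subtraction case
      obtain ⟨u, hu, huJ⟩ := hzero
      have hγi : ∀ i : Fin n, ∃ γ : ℝ, 0 < γ ∧ (i ∈ J →
          ∀ x : Fin n → ℝ, (∀ j, 0 ≤ x j) → (∀ j ∉ J.erase i, x j = 0) →
            γ * (v ⬝ᵥ x) ^ 2 ≤ x ⬝ᵥ A *ᵥ x) := by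
        intro i
        by_cases hiJ : i ∈ J
        · obtain ⟨γ, hγpos, hγ⟩ := ih (J.erase i) (by
            have := Finset.card_erase_of_mem hiJ
            omega)
          exact ⟨γ, hγpos, fun _ => hγ⟩
        · exact ⟨1, one_pos, fun h => absurd h hiJ⟩
      choose γf hγfpos hγf using hγi
      have hSw : (Finset.univ.filter fun i => u i ≠ 0).Nonempty := by
        rcases Function.ne_iff.mp hu.1 with ⟨i, hi⟩
        exact ⟨i, by simpa using hi⟩
      set S := Finset.univ.filter fun i => u i ≠ 0 with hS
      have hSJ : S ⊆ J := fun i hi => huJ i (by simpa [hS] using hi)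
      set γ := S.inf' hSw γf with hγdef
      have hγpos : 0 < γ := by
        rw [hγdef, Finset.lt_inf'_iff]
        exact fun i _ => hγfpos i
      refine ⟨γ, hγpos, fun x hx hxJ => ?_⟩
      have hupos : ∀ i ∈ S, 0 < u i := fun i hi =>
        lt_of_le_of_ne (hu.2.1 i) (Ne.symm (by simpa [hS] using hi))
      set α := S.inf' hSw (fun i => x i / u i) with hα
      obtain ⟨i₀, hi₀S, hi₀⟩ := S.exists_mem_eq_inf' hSw (fun i => x i / u i)
      have hαnonneg : 0 ≤ α := by
        rw [hα, Finset.le_inf'_iff]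
        exact fun i hi => div_nonneg (hx i) (hupos i hi).le
      set y := x - α • u with hy
      have hy_nonneg : ∀ i, 0 ≤ y i := by
        intro i
        by_cases hi : i ∈ S
        · have hle : α ≤ x i / u i := Finset.inf'_le _ hi
          have := (le_div_iff₀ (hupos i hi)).mp hle
          simp only [hy, Pi.sub_apply, Pi.smul_apply, smul_eq_mul]
          linarith
        · have : u i = 0 := by
            by_contra hne
            exact hi (by simpa [hS] using hne)
          simp [hy, this, hx i]
      have hyi₀ : y i₀ = 0 := by
        have hi₀eq : α = x i₀ / u i₀ := hi₀
        have hwi₀ := hupos i₀ hi₀S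
        simp only [hy, Pi.sub_apply, Pi.smul_apply, smul_eq_mul, hi₀eq]
        field_simp
        ring
      have hyJ : ∀ j ∉ J.erase i₀, y j = 0 := by
        intro j hj
        by_cases hji : j = i₀
        · subst hji; exact hyi₀
        · have hjJ : j ∉ J := by
            intro hjJ
            exact hj (Finset.mem_erase.mpr ⟨hji, hjJ⟩)
          have hxj := hxJ j hjJ
          have huj : u j = 0 := by
            by_contra hne
            exact hjJ (huJ j hne)
          simp [hy, hxj, huj]
      -- quadratic form comparison
      have hxdecomp : x = y + α • u := by rw [hy]; abel
      have hyAu : 0 ≤ y ⬝ᵥ A *ᵥ u := dot_mulVec_nonneg hA hu hy_nonneg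
      have hqx : x ⬝ᵥ A *ᵥ x = y ⬝ᵥ A *ᵥ y + 2 * (α * (y ⬝ᵥ A *ᵥ u)) := by
        rw [hxdecomp, quad_add A hA.1 y (α • u)]
        have h1 : (α • u) ⬝ᵥ A *ᵥ y = α * (u ⬝ᵥ A *ᵥ y) := by
          rw [smul_dotProduct]; simp
        have h2 : (α • u) ⬝ᵥ A *ᵥ (α • u) = α ^ 2 * (u ⬝ᵥ A *ᵥ u) := quad_smul A α u
        rw [h1, h2, hu.2.2, quad_swap A hA.1 u y]
        ring
      have hqxy : y ⬝ᵥ A *ᵥ y ≤ x ⬝ᵥ A *ᵥ x := by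
        rw [hqx]
        nlinarith [mul_nonneg hαnonneg hyAu]
      have hvx : v ⬝ᵥ x = v ⬝ᵥ y := by
        rw [hxdecomp, dotProduct_add, dotProduct_smul, smul_eq_mul,
          hv u hu, mul_zero, add_zero]
      have hIH := hγf i₀ (hSJ hi₀S) y hy_nonneg hyJ
      have hγle : γ ≤ γf i₀ := Finset.inf'_le _ hi₀S
      calc γ * (v ⬝ᵥ x) ^ 2 ≤ γf i₀ * (v ⬝ᵥ x) ^ 2 := by nlinarith [sq_nonneg (v ⬝ᵥ x)]
        _ = γf i₀ * (v ⬝ᵥ y) ^ 2 := by rw [hvx]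
        _ ≤ y ⬝ᵥ A *ᵥ y := hIH
        _ ≤ x ⬝ᵥ A *ᵥ x := hqxy
    · -- compactness case: no zero supported in J, so the form is positive on the simplex
      set Δ := {x : Fin n → ℝ | (∀ i, 0 ≤ x i) ∧ (∀ i ∉ J, x i = 0) ∧ ∑ i, x i = 1} with hΔ
      have hnorm : ∀ x : Fin n → ℝ, (∀ i, 0 ≤ x i) → (∀ i ∉ J, x i = 0) → x ≠ 0 →
          0 < (∑ i, x i) ∧ ((∑ i, x i)⁻¹ • x) ∈ Δ := by
        intro x hx hxJ hx0
        obtain ⟨i, hi⟩ := Function.ne_iff.mp hx0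
        have hxi : 0 < x i := lt_of_le_of_ne (hx i) (Ne.symm hi)
        have hs : 0 < ∑ j, x j :=
          lt_of_lt_of_le hxi (Finset.single_le_sum (fun j _ => hx j) (Finset.mem_univ i))
        refine ⟨hs, ⟨fun j => mul_nonneg (inv_nonneg.mpr hs.le) (hx j), ?_, ?_⟩⟩
        · intro j hj
          simp [hxJ j hj]
        · simp only [Pi.smul_apply, smul_eq_mul, ← Finset.mul_sum]
          field_simp
      by_cases hne : Δ.Nonempty
      · obtain ⟨x₀, hx₀Δ, hmin⟩ :=
          (simplex_compact J).exists_isMinOn hne (quad_continuous A).continuousOn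
        set m := x₀ ⬝ᵥ A *ᵥ x₀ with hm
        have hmpos : 0 < m := by
          rcases lt_or_eq_of_le (hA.2 x₀ hx₀Δ.1) with h | h
          · exact h
          · exfalso
            apply hzero
            refine ⟨x₀, ⟨?_, hx₀Δ.1, h.symm⟩, ?_⟩
            · intro h0
              have := hx₀Δ.2.2
              rw [h0] at this
              simp at this
            · intro i hi
              by_contra hiJ
              exact hi (hx₀Δ.2.1 i hiJ)
        set C := ∑ i, |v i| with hC
        have hCnonneg : 0 ≤ C := Finset.sum_nonneg fun i _ => abs_nonneg _
        refine ⟨m / (C ^ 2 + 1), div_pos hmpos (by positivity), fun x hx hxJ => ?_⟩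
        by_cases hx0 : x = 0
        · simp [hx0]
        · obtain ⟨hs, hyΔ⟩ := hnorm x hx hxJ hx0
          set s := ∑ i, x i with hsdef
          set y := s⁻¹ • x with hydef
          have hxy : x = s • y := by
            rw [hydef, smul_inv_smul₀ (ne_of_gt hs)]
          have hqx : x ⬝ᵥ A *ᵥ x = s ^ 2 * (y ⬝ᵥ A *ᵥ y) := by
            conv_lhs => rw [hxy]
            exact quad_smul A s y
          have hqy : m ≤ y ⬝ᵥ A *ᵥ y := hmin hyΔ
          have hvx : |v ⬝ᵥ x| ≤ C * s := by
            calc |v ⬝ᵥ x| ≤ ∑ i, |v i * x i| := Finset.abs_sum_le_sum_abs _ _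
              _ = ∑ i, |v i| * x i := by
                congr 1; ext i; rw [abs_mul, abs_of_nonneg (hx i)]
              _ ≤ ∑ i, C * x i :=
                Finset.sum_le_sum fun i _ => mul_le_mul_of_nonneg_right
                  (Finset.single_le_sum (fun j _ => abs_nonneg (v j)) (Finset.mem_univ i)) (hx i)
              _ = C * s := by rw [← Finset.mul_sum]
          have hvx2 : (v ⬝ᵥ x) ^ 2 ≤ C ^ 2 * s ^ 2 := by
            nlinarith [hvx, abs_nonneg (v ⬝ᵥ x), sq_abs (v ⬝ᵥ x)]
          rw [hqx]
          rw [div_mul_eq_mul_div, div_le_iff₀ (by positivity : (0:ℝ) < C ^ 2 + 1)]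
          nlinarith [hmpos, sq_nonneg s, mul_le_mul_of_nonneg_left hvx2 hmpos.le,
            mul_le_mul_of_nonneg_left hqy (mul_pos hs hs).le]
      · refine ⟨1, one_pos, fun x hx hxJ => ?_⟩
        by_cases hx0 : x = 0
        · simp [hx0]
        · exact absurd ⟨_, (hnorm x hx hxJ hx0).2⟩ hne
lemma dual_eq_dot (f : Module.Dual ℝ (Fin n → ℝ)) (y : Fin n → ℝ) :
    f y = (fun i => f (Pi.single i 1)) ⬝ᵥ y := by
  have hy : y = ∑ i, y i • (Pi.single i 1 : Fin n → ℝ) := by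
    ext j
    simp [Finset.sum_apply, Pi.single_apply]
  conv_lhs => rw [hy]
  rw [map_sum]
  simp [dotProduct, mul_comm]

/-- Separating functional realized as a dot product. -/
lemma exists_dual (p : Submodule ℝ (Fin n → ℝ)) (x₀ : Fin n → ℝ) (h : x₀ ∉ p) :
    ∃ v : Fin n → ℝ, (∀ y ∈ p, v ⬝ᵥ y = 0) ∧ v ⬝ᵥ x₀ ≠ 0 := by
  obtain ⟨f, hfx, hfp⟩ := p.exists_dual_map_eq_bot_of_notMem h inferInstance
  refine ⟨fun i => f (Pi.single i 1), fun y hy => ?_, ?_⟩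
  · rw [← dual_eq_dot]
    have : f y ∈ p.map f := ⟨y, hy, rfl⟩
    rwa [hfp, Submodule.mem_bot] at this
  · rw [← dual_eq_dot]
    exact hfx

lemma vecMulVec_mulVec_eq (v x : Fin n → ℝ) :
    Matrix.vecMulVec v v *ᵥ x = (v ⬝ᵥ x) • v := by
  ext i
  simp only [Matrix.vecMulVec_apply, Matrix.mulVec, dotProduct, Pi.smul_apply,
    smul_eq_mul, Finset.sum_mul]
  exact Finset.sum_congr rfl fun j _ => by ring

end Stmt17Aux

open Stmt17Aux in
theorem stmt17 {n : ℕ} (A : Matrix (Fin n) (Fin n) ℝ) (hA : Copositive A) :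
    IrreducibleWrtSet A {B : Matrix (Fin n) (Fin n) ℝ | B.PosSemidef} ↔
      Submodule.span ℝ {u : Fin n → ℝ | IsMinimalZeroOf A u} = ⊤ := by
  constructor
  · -- irreducible → span = ⊤
    intro hirr
    by_contra hspan
    obtain ⟨x₀, hx₀⟩ : ∃ x₀, x₀ ∉ Submodule.span ℝ {u : Fin n → ℝ | IsMinimalZeroOf A u} := by
      by_contra h
      push_neg at h
      exact hspan (Submodule.eq_top_iff'.mpr h)
    obtain ⟨v, hvspan, hvx₀⟩ := exists_dual _ x₀ hx₀
    have hvne : v ≠ 0 := by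
      intro h0
      apply hvx₀
      simp [h0]
    have hv : ∀ u, IsZeroOf A u → v ⬝ᵥ u = 0 := fun u hu =>
      hvspan u (zero_mem_span hA (Finset.univ.filter fun i => u i ≠ 0).card u hu le_rfl)
    obtain ⟨γ, hγpos, hγ⟩ := main_claim hA v hv Finset.univ.card Finset.univ le_rfl
    apply hirr
    refine ⟨γ, hγpos, Matrix.vecMulVec v v, ?_, ?_, ?_, ?_⟩
    · -- PSD
      refine Matrix.PosSemidef.of_dotProduct_mulVec_nonneg ?_ ?_
      · ext i j
        simp [Matrix.conjTranspose_apply, Matrix.vecMulVec_apply, mul_comm]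
      · intro x
        rw [show star x = x from rfl, vecMulVec_mulVec_eq, dotProduct_smul, smul_eq_mul,
          dotProduct_comm]
        exact mul_self_nonneg _
    · -- nonzero
      obtain ⟨i, hi⟩ := Function.ne_iff.mp hvne
      intro h0
      have : Matrix.vecMulVec v v i i = 0 := by rw [h0]; rfl
      rw [Matrix.vecMulVec_apply] at this
      exact hi (mul_self_eq_zero.mp this)
    · -- symmetry part of copositivity
      unfold Matrix.IsSymm
      rw [Matrix.transpose_sub, Matrix.transpose_smul, hA.1]
      congr 1
      congr 1
      ext i j
      simp [Matrix.transpose_apply, Matrix.vecMulVec_apply, mul_comm]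
    · intro x hx
      have hexp : x ⬝ᵥ (A - γ • Matrix.vecMulVec v v) *ᵥ x =
          x ⬝ᵥ A *ᵥ x - γ * (v ⬝ᵥ x) ^ 2 := by
        rw [Matrix.sub_mulVec, dotProduct_sub, Matrix.smul_mulVec,
          dotProduct_smul, vecMulVec_mulVec_eq, dotProduct_smul]
        simp only [smul_eq_mul]
        rw [dotProduct_comm x v]
        ring
      rw [hexp, sub_nonneg]
      exact hγ x hx (fun i hi => absurd (Finset.mem_univ i) hi)
  · -- span = ⊤ → irreducible
    intro hspan
    rintro ⟨γ, hγpos, B, hBpsd, hBne, hcop⟩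
    have hBu : ∀ u, IsMinimalZeroOf A u → B *ᵥ u = 0 := by
      intro u hu
      have h1 := hcop.2 u hu.1.2.1
      have hexp : u ⬝ᵥ (A - γ • B) *ᵥ u = u ⬝ᵥ A *ᵥ u - γ * (u ⬝ᵥ B *ᵥ u) := by
        rw [Matrix.sub_mulVec, dotProduct_sub, Matrix.smul_mulVec,
          dotProduct_smul, smul_eq_mul]
      rw [hexp, hu.1.2.2] at h1
      have h2 : 0 ≤ u ⬝ᵥ B *ᵥ u := by
        have := hBpsd.dotProduct_mulVec_nonneg u
        rwa [show star u = u from rfl] at this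
      have h3 : u ⬝ᵥ B *ᵥ u = 0 := by nlinarith
      have := (hBpsd.dotProduct_mulVec_zero_iff u).mp (by rwa [show star u = u from rfl])
      exact this
    have hker : Submodule.span ℝ {u : Fin n → ℝ | IsMinimalZeroOf A u} ≤
        LinearMap.ker (Matrix.mulVecLin B) := by
      rw [Submodule.span_le]
      intro u hu
      simp only [SetLike.mem_coe, LinearMap.mem_ker, Matrix.mulVecLin_apply]
      exact hBu u hu
    rw [hspan, top_le_iff] at hker
    apply hBne
    ext i j
    have : Matrix.mulVecLin B (Pi.single j 1) = 0 := by
      rw [← LinearMap.mem_ker, hker]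
      trivial
    have h := congrFun this i
    simpa [Matrix.mulVecLin_apply, Matrix.mulVec_single] using h
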